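/- Let {S(t) : t ≥ 0} be a semigroup on a nonempty subset V of a normed space X, T > 0, and let B be a bounded subset of V. If the semigroup satisfies the smoothing property on B at time T with parameters (η,κ), then it is quasi-stable on B at time T with parameters (η,κ): in case (i) with respect to the compact seminorm z ↦ ‖z‖_X on Z, and in case (ii) with respect to the compact seminorm x ↦ ‖x‖_Y on X. Moreover, if S(T)B ⊆ B, then for any σ ∈ (0,1−η) the covering condition N^V(S(kT)B, a·q^k) ≤ b·h^k (for some a,b > 0, k₀ ∈ ℕ and all integers k ≥ k₀) holds with q = η+σ and h = m_{‖·‖_X}(B̄^Z(0,1), σ/(2κ)) in case (i), and h = m_{‖·‖_Y}(B̄^X(0,1), σ/(2κ)) in case (ii). -/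

import Mathlib

open Filter Metric Set Topology Bornology
open scoped ENNReal

section GenericDefs

variable {W : Type*} [MetricSpace W]

/-- One-sided Hausdorff distance `dist(G,A) = sup_{x∈G} inf_{y∈A} d(x,y)` (in `ℝ≥0∞`). -/
noncomputable def attrDist (G A : Set W) : ℝ≥0∞ :=
  ⨆ x ∈ G, EMetric.infEdist x A

/-- `N(G,ε)`: minimal number of open `ε`-balls centered in `G` needed to cover `G`. -/
noncomputable def coverN (G : Set W) (ε : ℝ) : ℝ≥0∞ :=
  ⨅ (F : Finset W) (_ : ↑F ⊆ G) (_ : G ⊆ ⋃ x ∈ F, ball x ε), (F.card : ℝ≥0∞)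

open Classical in
/-- Fractal (box-counting) dimension `limsup_{ε→0⁺} log N(M,ε) / log (1/ε)`. -/
noncomputable def fracDim (M : Set W) : ℝ≥0∞ :=
  limsup (fun ε : ℝ =>
    if coverN M ε = ⊤ then (⊤ : ℝ≥0∞)
    else ENNReal.ofReal (Real.log (coverN M ε).toReal / Real.log (1 / ε))) (𝓝[>] (0 : ℝ))

/-- `m_ρ(F,ε)`: the maximal cardinality of an `ε`-distinguishable (w.r.t. `ρ`) subset of `F`. -/
noncomputable def maxDisting {α : Type*} (ρ : α → α → ℝ) (F : Set α) (ε : ℝ) : ℝ≥0∞ :=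
  ⨆ (U : Finset α) (_ : ↑U ⊆ F) (_ : ∀ x ∈ U, ∀ y ∈ U, x ≠ y → ε ≤ ρ x y),
    (U.card : ℝ≥0∞)

end GenericDefs

section OnDefs

variable {X : Type*} [NormedAddCommGroup X]

/-- A semigroup (semiflow) of maps on the subset `V` of `X`. -/
def IsSemiflowOn (V : Set X) (S : ℝ → X → X) : Prop :=
  (∀ x ∈ V, S 0 x = x) ∧ (∀ t : ℝ, 0 ≤ t → ∀ x ∈ V, S t x ∈ V) ∧
    (∀ t s : ℝ, 0 ≤ t → 0 ≤ s → ∀ x ∈ V, S t (S s x) = S (t + s) x)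

/-- The set `A` attracts all bounded subsets of `V`. -/
def AttractsSetOn (V : Set X) (S : ℝ → X → X) (A : Set X) : Prop :=
  ∀ G : Set X, G ⊆ V → IsBounded G →
    Tendsto (fun t : ℝ => attrDist (S t '' G) A) atTop (𝓝 0)

/-- A global attractor in `V`: nonempty, compact, invariant, attracts all bounded subsets. -/
def IsGlobalAttrOn (V : Set X) (S : ℝ → X → X) (A : Set X) : Prop :=
  A.Nonempty ∧ A ⊆ V ∧ IsCompact A ∧ (∀ t : ℝ, 0 ≤ t → S t '' A = A) ∧
    AttractsSetOn V S A

/-- `B` is an absorbing set for the semigroup on `V`. -/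
def IsAbsorbingSetOn (V : Set X) (S : ℝ → X → X) (B : Set X) : Prop :=
  ∀ G : Set X, G ⊆ V → IsBounded G → ∃ tG : ℝ, 0 ≤ tG ∧ ∀ t : ℝ, tG ≤ t → S t '' G ⊆ B

/-- The semigroup on `V` is asymptotically closed. -/
def AsympClosedOn (V : Set X) (S : ℝ → X → X) : Prop :=
  ∀ t : ℝ, 0 ≤ t → ∀ tk : ℕ → ℝ, (∀ k, 0 ≤ tk k) → Tendsto tk atTop atTop →
    ∀ xk : ℕ → X, (∀ k, xk k ∈ V) → IsBounded (range xk) →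
      ∀ x y : X, x ∈ V → y ∈ V →
        Tendsto (fun k => S (tk k) (xk k)) atTop (𝓝 x) →
        Tendsto (fun k => S (t + tk k) (xk k)) atTop (𝓝 y) → S t x = y

/-- `M` attracts all bounded subsets of `V` at exponential rate `ξ`. -/
def ExpAttractsAtOn (V : Set X) (S : ℝ → X → X) (M : Set X) (ξ : ℝ) : Prop :=
  ∀ G : Set X, G ⊆ V → IsBounded G →
    Tendsto (fun t : ℝ => ENNReal.ofReal (Real.exp (ξ * t)) * attrDist (S t '' G) M)
      atTop (𝓝 0)

/-- A `T`-discrete exponential attractor for the semigroup on `V`. -/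
def IsDiscExpAttrOn (V : Set X) (S : ℝ → X → X) (T : ℝ) (M : Set X) : Prop :=
  M.Nonempty ∧ M ⊆ V ∧ IsCompact M ∧ S T '' M ⊆ M ∧ fracDim M ≠ ⊤ ∧
    ∃ ξ : ℝ, 0 < ξ ∧ ExpAttractsAtOn V S M ξ

end OnDefs

section Statement10

/-- `n` is a compact seminorm: every bounded sequence has an `n`-Cauchy subsequence. -/
def IsCompactSeminorm {Z : Type*} [NormedAddCommGroup Z] (n : Z → ℝ) : Prop :=
  ∀ zk : ℕ → Z, IsBounded (range zk) → ∃ φ : ℕ → ℕ, StrictMono φ ∧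
    ∀ δ : ℝ, 0 < δ → ∃ N : ℕ, ∀ j ≥ N, ∀ l ≥ N, n (zk (φ j) - zk (φ l)) < δ


section AuxLemmas

lemma aux_compactSeminorm {E W : Type*} [NormedAddCommGroup E] [NormedSpace ℝ E]
    [NormedAddCommGroup W] [NormedSpace ℝ W] (e : E →L[ℝ] W)
    (hcpt : ∀ s : Set E, IsBounded s → IsCompact (closure (e '' s))) :
    IsCompactSeminorm (fun z : E => ‖e z‖) := by
  intro zk hbdd
  have hmem : ∀ n, e (zk n) ∈ closure (e '' range zk) :=
    fun n => subset_closure ⟨zk n, mem_range_self n, rfl⟩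
  obtain ⟨x, -, φ, hφ, hconv⟩ := (hcpt _ hbdd).tendsto_subseq hmem
  refine ⟨φ, hφ, fun δ hδ => ?_⟩
  obtain ⟨N, hN⟩ := Metric.tendsto_atTop.mp hconv (δ/2) (by linarith)
  refine ⟨N, fun j hj l hl => ?_⟩
  have h1 := hN j hj
  have h2 := hN l hl
  simp only [Function.comp] at h1 h2
  calc ‖e (zk (φ j) - zk (φ l))‖ = dist (e (zk (φ j))) (e (zk (φ l))) := by
        rw [map_sub, dist_eq_norm]
    _ ≤ dist (e (zk (φ j))) x + dist (e (zk (φ l))) x := dist_triangle_right _ _ _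
    _ < δ := by linarith

lemma aux_maxsep {E W : Type*} [NormedAddCommGroup E] [NormedSpace ℝ E]
    [NormedAddCommGroup W] [NormedSpace ℝ W] (e : E →L[ℝ] W)
    (hcpt : ∀ s : Set E, IsBounded s → IsCompact (closure (e '' s)))
    (ε : ℝ) (hε : 0 < ε) :
    ∃ U : Finset E, ↑U ⊆ closedBall (0:E) 1 ∧
      (∀ x ∈ U, ∀ y ∈ U, x ≠ y → ε ≤ ‖e x - e y‖) ∧
      ∀ z ∈ closedBall (0:E) 1, ∃ u ∈ U, ‖e z - e u‖ < ε := by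
  classical
  have htb : TotallyBounded (e '' closedBall (0:E) 1) :=
    ((hcpt _ isBounded_closedBall).totallyBounded).subset subset_closure
  obtain ⟨t, htfin, htcov⟩ := totallyBounded_iff.mp htb (ε/2) (by linarith)
  set N := htfin.toFinset.card with hN
  have hbound : ∀ W' : Finset E, ↑W' ⊆ closedBall (0:E) 1 →
      (∀ x ∈ W', ∀ y ∈ W', x ≠ y → ε ≤ ‖e x - e y‖) → W'.card ≤ N := by
    intro W' hWs hWsep
    have hch : ∀ w : E, ∃ c, w ∈ W' → c ∈ htfin.toFinset ∧ e w ∈ ball c (ε/2) := by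
      intro w
      by_cases hw : w ∈ W'
      · have : e w ∈ ⋃ y ∈ t, ball y (ε/2) := htcov ⟨w, hWs hw, rfl⟩
        obtain ⟨c, hc, hc2⟩ := mem_iUnion₂.mp this
        exact ⟨c, fun _ => ⟨htfin.mem_toFinset.mpr hc, hc2⟩⟩
      · exact ⟨0, fun h => absurd h hw⟩
    choose f hf using hch
    refine Finset.card_le_card_of_injOn f (fun a ha => (hf a ha).1) ?_
    intro a ha b hb hab
    by_contra hne
    have h1 := (hf a ha).2
    have h2 := (hf b hb).2
    rw [hab] at h1
    have : dist (e a) (e b) < ε := by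
      calc dist (e a) (e b) ≤ dist (e a) (f b) + dist (e b) (f b) := dist_triangle_right _ _ _
        _ < ε/2 + ε/2 := add_lt_add (mem_ball.mp h1) (mem_ball.mp h2)
        _ = ε := by ring
    rw [dist_eq_norm] at this
    exact absurd (hWsep a ha b hb hne) (not_le.mpr this)
  set P : ℕ → Prop := fun n => ∃ W' : Finset E, ↑W' ⊆ closedBall (0:E) 1 ∧
    (∀ x ∈ W', ∀ y ∈ W', x ≠ y → ε ≤ ‖e x - e y‖) ∧ W'.card = n with hP
  have hP0 : P 0 := ⟨∅, by simp, by simp, rfl⟩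
  have hspec : P (Nat.findGreatest P N) := Nat.findGreatest_spec (Nat.zero_le N) hP0
  obtain ⟨U, hU1, hU2, hUcard⟩ := hspec
  refine ⟨U, hU1, hU2, fun z hz => ?_⟩
  by_contra hcon
  push_neg at hcon
  have hzU : z ∉ U := by
    intro hzU
    have := hcon z hzU
    simp at this
    linarith
  have hsep' : ∀ x ∈ insert z U, ∀ y ∈ insert z U, x ≠ y → ε ≤ ‖e x - e y‖ := by
    intro x hx y hy hxy
    rcases Finset.mem_insert.mp hx with rfl | hx'
    · rcases Finset.mem_insert.mp hy with rfl | hy'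
      · exact absurd rfl hxy
      · exact hcon y hy'
    · rcases Finset.mem_insert.mp hy with rfl | hy'
      · rw [norm_sub_rev]; exact hcon x hx'
      · exact hU2 x hx' y hy' hxy
  have hsub' : ↑(insert z U) ⊆ closedBall (0:E) 1 := by
    intro w hw
    rcases Finset.mem_coe.mp hw |> Finset.mem_insert.mp with rfl | hw'
    · exact hz
    · exact hU1 hw'
  have hcard' : (insert z U).card = U.card + 1 := Finset.card_insert_of_notMem hzU
  have hPn : P (U.card + 1) := ⟨insert z U, hsub', hsep', hcard'⟩
  have hle : U.card + 1 ≤ N := hcard' ▸ hbound _ hsub' hsep'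
  exact Nat.findGreatest_is_greatest (by omega) hle hPn

lemma cover_main {X : Type*} [NormedAddCommGroup X] {E : Type*}
    (V B : Set X) (S : ℝ → X → X) (hS : IsSemiflowOn V S)
    (T : ℝ) (hT : 0 ≤ T) (hBV : B ⊆ V) (hBbdd : IsBounded B)
    (hinv : S T '' B ⊆ B) (q : ℝ) (hq : 0 < q) (U : Finset E)
    (hstep : ∀ d : ℝ, 0 < d → ∀ F : Set X, F ⊆ B →
      (∀ y ∈ F, ∀ y' ∈ F, ‖y - y'‖ ≤ d) →
      ∃ P : E → Set X, (∀ u, P u ⊆ F) ∧ (F ⊆ ⋃ u ∈ U, P u) ∧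
        ∀ u, ∀ y ∈ P u, ∀ y' ∈ P u, ‖S T y - S T y'‖ ≤ q * d) :
    ∃ a : ℝ, 0 < a ∧ ∀ k : ℕ,
      coverN (S (↑k * T) '' B) (a * q ^ k) ≤ (U.card : ℝ≥0∞) ^ k := by
  classical
  have hkB : ∀ k : ℕ, S (↑k * T) '' B ⊆ B := by
    intro k
    induction k with
    | zero =>
      rintro x ⟨y, hy, rfl⟩
      simpa [hS.1 y (hBV hy)] using hy
    | succ k ih =>
      rintro x ⟨y, hy, rfl⟩
      have h1 : S T (S (↑k * T) y) = S ((↑(k+1) : ℝ) * T) y := by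
        rw [hS.2.2 T (↑k * T) hT (mul_nonneg k.cast_nonneg hT) y (hBV hy)]
        push_cast; ring_nf
      rw [← h1]
      exact hinv ⟨S (↑k * T) y, ih ⟨y, hy, rfl⟩, rfl⟩
  have himg : ∀ k : ℕ, S ((↑(k+1) : ℕ) * T) '' B = S T '' (S (↑k * T) '' B) := by
    intro k
    rw [Set.image_image]
    apply Set.image_congr
    intro x hx
    rw [hS.2.2 T (↑k * T) hT (mul_nonneg k.cast_nonneg hT) x (hBV hx)]
    push_cast; ring_nf
  obtain ⟨D, hD⟩ := isBounded_iff.mp hBbdd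
  set d₀ : ℝ := max D 1 with hd₀def
  have hd₀ : 0 < d₀ := lt_of_lt_of_le one_pos (le_max_right _ _)
  have inv : ∀ k : ℕ, ∃ 𝒢 : Finset (Set X), 𝒢.card ≤ U.card ^ k ∧
      (∀ F ∈ 𝒢, F ⊆ S (↑k * T) '' B) ∧ (S (↑k * T) '' B ⊆ ⋃₀ ↑𝒢) ∧
      (∀ F ∈ 𝒢, ∀ y ∈ F, ∀ y' ∈ F, ‖y - y'‖ ≤ d₀ * q ^ k) := by
    intro k
    induction k with
    | zero =>
      refine ⟨{B}, by simp, ?_, ?_, ?_⟩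
      · intro F hF
        rw [Finset.mem_singleton.mp hF]
        intro x hx
        refine ⟨x, hx, ?_⟩
        simpa using hS.1 x (hBV hx)
      · intro x hx
        exact ⟨B, by simp, hkB 0 hx⟩
      · intro F hF y hy y' hy'
        rw [Finset.mem_singleton.mp hF] at hy hy'
        simp only [pow_zero, mul_one]
        calc ‖y - y'‖ = dist y y' := (dist_eq_norm _ _).symm
          _ ≤ D := hD hy hy'
          _ ≤ d₀ := le_max_left _ _
    | succ k ih =>
      obtain ⟨𝒢, hcard, hsub, hcov, hdiam⟩ := ih
      have hdk : 0 < d₀ * q ^ k := mul_pos hd₀ (pow_pos hq k)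
      have hP : ∀ F : {F // F ∈ 𝒢}, ∃ P : E → Set X, (∀ u, P u ⊆ (F : Set X)) ∧
          ((F : Set X) ⊆ ⋃ u ∈ U, P u) ∧
          ∀ u, ∀ y ∈ P u, ∀ y' ∈ P u, ‖S T y - S T y'‖ ≤ q * (d₀ * q ^ k) := by
        intro ⟨F, hF⟩
        exact hstep (d₀ * q ^ k) hdk F (fun x hx => hkB k (hsub F hF hx)) (hdiam F hF)
      choose P hP1 hP2 hP3 using hP
      refine ⟨(𝒢.attach ×ˢ U).image (fun p => S T '' P p.1 p.2), ?_, ?_, ?_, ?_⟩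
      · calc ((𝒢.attach ×ˢ U).image (fun p => S T '' P p.1 p.2)).card
            ≤ (𝒢.attach ×ˢ U).card := Finset.card_image_le
          _ = 𝒢.card * U.card := by rw [Finset.card_product, Finset.card_attach]
          _ ≤ U.card ^ k * U.card := Nat.mul_le_mul_right _ hcard
          _ = U.card ^ (k+1) := by ring
      · intro F' hF'
        obtain ⟨p, hp, rfl⟩ := Finset.mem_image.mp hF'
        rw [himg k]
        exact Set.image_mono ((hP1 p.1 p.2).trans (hsub p.1 p.1.2))
      · intro x hx
        rw [himg k] at hx
        obtain ⟨y, hy, rfl⟩ := hx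
        obtain ⟨F, hF𝒢, hyF⟩ := hcov hy
        obtain ⟨u, hu, hyu⟩ := mem_iUnion₂.mp (hP2 ⟨F, hF𝒢⟩ hyF)
        refine ⟨S T '' P ⟨F, hF𝒢⟩ u, ?_, ⟨y, hyu, rfl⟩⟩
        exact Finset.mem_coe.mpr (Finset.mem_image.mpr
          ⟨(⟨F, hF𝒢⟩, u), Finset.mem_product.mpr ⟨Finset.mem_attach _ _, hu⟩, rfl⟩)
      · intro F' hF' x hx x' hx'
        obtain ⟨p, hp, rfl⟩ := Finset.mem_image.mp hF'
        obtain ⟨y, hy, rfl⟩ := hx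
        obtain ⟨y', hy', rfl⟩ := hx'
        calc ‖S T y - S T y'‖ ≤ q * (d₀ * q ^ k) := hP3 p.1 p.2 y hy y' hy'
          _ = d₀ * q ^ (k+1) := by ring
  refine ⟨2 * d₀, by linarith, fun k => ?_⟩
  obtain ⟨𝒢, hcard, hsub, hcov, hdiam⟩ := inv k
  set c : Set X → X := fun F => if h : F.Nonempty then h.choose else 0 with hc
  have hcF : ∀ F : Set X, F.Nonempty → c F ∈ F := by
    intro F hF
    simp only [hc, dif_pos hF]
    exact hF.choose_spec
  set Fc : Finset X := (𝒢.filter (fun F => F.Nonempty)).image c with hFc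
  have hFcsub : ↑Fc ⊆ S (↑k * T) '' B := by
    intro x hx
    obtain ⟨F, hF, rfl⟩ := Finset.mem_image.mp (Finset.mem_coe.mp hx)
    obtain ⟨hF𝒢, hFne⟩ := Finset.mem_filter.mp hF
    exact hsub F hF𝒢 (hcF F hFne)
  have hFccov : S (↑k * T) '' B ⊆ ⋃ x ∈ Fc, ball x (2 * d₀ * q ^ k) := by
    intro y hy
    obtain ⟨F, hF𝒢, hyF⟩ := hcov hy
    have hFne : F.Nonempty := ⟨y, hyF⟩
    have hcFm : c F ∈ Fc := Finset.mem_image.mpr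
      ⟨F, Finset.mem_filter.mpr ⟨hF𝒢, hFne⟩, rfl⟩
    refine mem_iUnion₂.mpr ⟨c F, hcFm, ?_⟩
    rw [mem_ball, dist_eq_norm]
    have h1 : ‖y - c F‖ ≤ d₀ * q ^ k := hdiam F hF𝒢 y hyF (c F) (hcF F hFne)
    have h2 : 0 < d₀ * q ^ k := mul_pos hd₀ (pow_pos hq k)
    calc ‖y - c F‖ ≤ d₀ * q ^ k := h1
      _ < 2 * d₀ * q ^ k := by nlinarith
  have hN : coverN (S (↑k * T) '' B) (2 * d₀ * q ^ k) ≤ (Fc.card : ℝ≥0∞) := by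
    apply iInf_le_of_le Fc
    apply iInf_le_of_le hFcsub
    exact iInf_le_of_le hFccov le_rfl
  calc coverN (S (↑k * T) '' B) (2 * d₀ * q ^ k) ≤ (Fc.card : ℝ≥0∞) := hN
    _ ≤ ((U.card ^ k : ℕ) : ℝ≥0∞) := by
        apply Nat.cast_le.mpr
        calc Fc.card ≤ (𝒢.filter (fun F => F.Nonempty)).card := Finset.card_image_le
          _ ≤ 𝒢.card := Finset.card_filter_le _ _
          _ ≤ U.card ^ k := hcard
    _ = (U.card : ℝ≥0∞) ^ k := by push_cast; ring

end AuxLemmas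

variable {X : Type*} [NormedAddCommGroup X] [NormedSpace ℝ X]
  {Y Z : Type*} [NormedAddCommGroup Y] [NormedSpace ℝ Y]
  [NormedAddCommGroup Z] [NormedSpace ℝ Z]

theorem smoothing_implies_quasi_stability_and_covering
    (V : Set X) (hV : V.Nonempty)
    (S : ℝ → X → X) (hS : IsSemiflowOn V S) (T : ℝ) (hT : 0 < T)
    (B : Set X) (hBV : B ⊆ V) (hBbdd : IsBounded B)
    (η κ : ℝ) (hη0 : 0 ≤ η) (hη1 : η < 1) (hκ : 0 < κ)
    -- compact embeddings: `ι : Z → X` (case (i)) and `jι : X → Y` (case (ii))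
    (ι : Z →L[ℝ] X) (hι_inj : Function.Injective ι)
    (hι_cpt : ∀ s : Set Z, IsBounded s → IsCompact (closure (ι '' s)))
    (jι : X →L[ℝ] Y) (hjι_inj : Function.Injective jι)
    (hjι_cpt : ∀ s : Set X, IsBounded s → IsCompact (closure (jι '' s))) :
    -- Case (i): `S(T) = C(T) + M(T)` with `M(T) : B → Z`, `Z` compactly embedded in `X`
    (∀ (C : X → X) (M : X → Z),
      (∀ x ∈ B, S T x = C x + ι (M x)) →
      (∀ x ∈ B, ∀ y ∈ B, ‖C x - C y‖ ≤ η * ‖x - y‖) →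
      (∀ x ∈ B, ∀ y ∈ B, ‖M x - M y‖ ≤ κ * ‖x - y‖) →
      -- quasi-stability on `B` at time `T` with parameters `(η,κ)` w.r.t. `z ↦ ‖z‖_X` on `Z`
      (IsCompactSeminorm (fun z : Z => ‖ι z‖) ∧
        ∃ K : X → Z, (∀ x ∈ B, ∀ y ∈ B, ‖K x - K y‖ ≤ κ * ‖x - y‖) ∧
          (∀ x ∈ B, ∀ y ∈ B, ‖S T x - S T y‖ ≤ η * ‖x - y‖ + ‖ι (K x) - ι (K y)‖)) ∧
      -- covering condition
      (S T '' B ⊆ B → ∀ σ : ℝ, 0 < σ → σ < 1 - η →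
        ∃ (k₀ : ℕ) (a b : ℝ), 0 < a ∧ 0 < b ∧ ∀ k : ℕ, k₀ ≤ k →
          coverN (S (k * T) '' B) (a * (η + σ) ^ k) ≤ ENNReal.ofReal b *
            (maxDisting (fun z w : Z => ‖ι z - ι w‖) (closedBall (0 : Z) 1)
              (σ / (2 * κ))) ^ k)) ∧
    -- Case (ii): `S(T) = C(T) + M(T)` with `X` compactly embedded in `Y`
    (∀ (C M : X → X),
      (∀ x ∈ B, S T x = C x + M x) →
      (∀ x ∈ B, ∀ y ∈ B, ‖C x - C y‖ ≤ η * ‖x - y‖) →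
      (∀ x ∈ B, ∀ y ∈ B, ‖M x - M y‖ ≤ κ * ‖jι x - jι y‖) →
      -- quasi-stability on `B` at time `T` with parameters `(η,κ)` w.r.t. `x ↦ ‖x‖_Y` on `X`
      (IsCompactSeminorm (fun x : X => ‖jι x‖) ∧
        ∃ K : X → X, (∀ x ∈ B, ∀ y ∈ B, ‖K x - K y‖ ≤ κ * ‖x - y‖) ∧
          (∀ x ∈ B, ∀ y ∈ B, ‖S T x - S T y‖ ≤ η * ‖x - y‖ + ‖jι (K x) - jι (K y)‖)) ∧
      -- covering condition
      (S T '' B ⊆ B → ∀ σ : ℝ, 0 < σ → σ < 1 - η →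
        ∃ (k₀ : ℕ) (a b : ℝ), 0 < a ∧ 0 < b ∧ ∀ k : ℕ, k₀ ≤ k →
          coverN (S (k * T) '' B) (a * (η + σ) ^ k) ≤ ENNReal.ofReal b *
            (maxDisting (fun x w : X => ‖jι x - jι w‖) (closedBall (0 : X) 1)
              (σ / (2 * κ))) ^ k)) := by
  constructor
  · -- Case (i)
    intro C M hdecomp hC hM
    constructor
    · refine ⟨aux_compactSeminorm ι hι_cpt, M, hM, fun x hx y hy => ?_⟩
      rw [hdecomp x hx, hdecomp y hy]
      have heq : (C x + ι (M x)) - (C y + ι (M y))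
          = (C x - C y) + (ι (M x) - ι (M y)) := by abel
      rw [heq]
      calc ‖(C x - C y) + (ι (M x) - ι (M y))‖
          ≤ ‖C x - C y‖ + ‖ι (M x) - ι (M y)‖ := norm_add_le _ _
        _ ≤ η * ‖x - y‖ + ‖ι (M x) - ι (M y)‖ := by
            have := hC x hx y hy; linarith
    · intro hinvB σ hσ hσ'
      have hε : 0 < σ / (2*κ) := by positivity
      obtain ⟨U, hU1, hU2, hUmax⟩ := aux_maxsep ι hι_cpt (σ/(2*κ)) hε
      have hq : 0 < η + σ := by linarith
      have hstep : ∀ d : ℝ, 0 < d → ∀ F : Set X, F ⊆ B →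
          (∀ y ∈ F, ∀ y' ∈ F, ‖y - y'‖ ≤ d) →
          ∃ P : Z → Set X, (∀ u, P u ⊆ F) ∧ (F ⊆ ⋃ u ∈ U, P u) ∧
            ∀ u, ∀ y ∈ P u, ∀ y' ∈ P u, ‖S T y - S T y'‖ ≤ (η + σ) * d := by
        intro d hd F hFB hFd
        by_cases hFne : F.Nonempty
        · obtain ⟨y₀, hy₀⟩ := hFne
          have hκd : (0:ℝ) < κ * d := by positivity
          refine ⟨fun u => {y ∈ F |
            ‖ι ((κ*d)⁻¹ • (M y - M y₀)) - ι u‖ < σ/(2*κ)}, fun u => sep_subset _ _, ?_, ?_⟩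
          · intro y hy
            have hz : (κ*d)⁻¹ • (M y - M y₀) ∈ closedBall (0:Z) 1 := by
              rw [mem_closedBall, dist_zero_right, norm_smul, norm_inv,
                Real.norm_eq_abs, abs_of_pos hκd]
              have h1 : ‖M y - M y₀‖ ≤ κ * d := by
                calc ‖M y - M y₀‖ ≤ κ * ‖y - y₀‖ := hM y (hFB hy) y₀ (hFB hy₀)
                  _ ≤ κ * d := by nlinarith [hFd y hy y₀ hy₀]
              calc (κ*d)⁻¹ * ‖M y - M y₀‖ ≤ (κ*d)⁻¹ * (κ*d) := by
                    apply mul_le_mul_of_nonneg_left h1 (by positivity)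
                _ = 1 := inv_mul_cancel₀ (ne_of_gt hκd)
            obtain ⟨u, hu, hu2⟩ := hUmax _ hz
            exact mem_iUnion₂.mpr ⟨u, hu, hy, hu2⟩
          · intro u y hy y' hy'
            obtain ⟨hyF, hyb⟩ := hy
            obtain ⟨hy'F, hy'b⟩ := hy'
            have h4 : ι ((κ*d)⁻¹ • (M y - M y₀)) - ι ((κ*d)⁻¹ • (M y' - M y₀))
                = (κ*d)⁻¹ • (ι (M y) - ι (M y')) := by
              have he : (M y - M y₀) - (M y' - M y₀) = M y - M y' := by abel
              rw [← map_sub, ← smul_sub, he, map_smul, map_sub]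
            have h3 : (κ*d)⁻¹ * ‖ι (M y) - ι (M y')‖ < σ/κ := by
              have hsum : σ/(2*κ) + σ/(2*κ) = σ/κ := by
                rw [← add_div, show σ + σ = 2 * σ by ring,
                  mul_div_mul_left σ κ two_ne_zero]
              have htri : ‖ι ((κ*d)⁻¹ • (M y - M y₀)) - ι ((κ*d)⁻¹ • (M y' - M y₀))‖
                  ≤ ‖ι ((κ*d)⁻¹ • (M y - M y₀)) - ι u‖
                    + ‖ι ((κ*d)⁻¹ • (M y' - M y₀)) - ι u‖ := by
                simpa [dist_eq_norm] using dist_triangle_right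
                  (ι ((κ*d)⁻¹ • (M y - M y₀))) (ι ((κ*d)⁻¹ • (M y' - M y₀))) (ι u)
              have hlt := htri.trans_lt ((add_lt_add hyb hy'b).trans_le hsum.le)
              rw [h4, norm_smul, norm_inv, Real.norm_eq_abs, abs_of_pos hκd] at hlt
              exact hlt
            have key : ‖ι (M y) - ι (M y')‖ ≤ σ * d := by
              have h5 : ‖ι (M y) - ι (M y')‖ = (κ*d) * ((κ*d)⁻¹ * ‖ι (M y) - ι (M y')‖) := by
                field_simp
              rw [h5]
              calc (κ*d) * ((κ*d)⁻¹ * ‖ι (M y) - ι (M y')‖)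
                  ≤ (κ*d) * (σ/κ) := mul_le_mul_of_nonneg_left h3.le hκd.le
                _ = σ * d := by field_simp
            rw [hdecomp y (hFB hyF), hdecomp y' (hFB hy'F)]
            have heq : (C y + ι (M y)) - (C y' + ι (M y'))
                = (C y - C y') + (ι (M y) - ι (M y')) := by abel
            rw [heq]
            calc ‖(C y - C y') + (ι (M y) - ι (M y'))‖
                ≤ ‖C y - C y'‖ + ‖ι (M y) - ι (M y')‖ := norm_add_le _ _
              _ ≤ η * ‖y - y'‖ + σ * d := add_le_add (hC y (hFB hyF) y' (hFB hy'F)) key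
              _ ≤ η * d + σ * d := by nlinarith [hFd y hyF y' hy'F]
              _ = (η + σ) * d := by ring
        · refine ⟨fun _ => ∅, by simp, ?_, by simp⟩
          rw [not_nonempty_iff_eq_empty.mp hFne]
          exact empty_subset _
      obtain ⟨a, ha, hcov⟩ := cover_main V B S hS T hT.le hBV hBbdd hinvB (η+σ) hq U hstep
      refine ⟨0, a, 1, ha, one_pos, fun k _ => ?_⟩
      have hle : (U.card : ℝ≥0∞) ≤ maxDisting (fun z w : Z => ‖ι z - ι w‖)
          (closedBall (0 : Z) 1) (σ / (2 * κ)) :=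
        le_iSup_of_le U (le_iSup_of_le hU1 (le_iSup_of_le hU2 le_rfl))
      calc coverN (S (↑k * T) '' B) (a * (η + σ) ^ k) ≤ (U.card : ℝ≥0∞) ^ k := hcov k
        _ ≤ (maxDisting (fun z w : Z => ‖ι z - ι w‖)
              (closedBall (0 : Z) 1) (σ / (2 * κ))) ^ k := pow_le_pow_left' hle k
        _ = ENNReal.ofReal 1 * (maxDisting (fun z w : Z => ‖ι z - ι w‖)
              (closedBall (0 : Z) 1) (σ / (2 * κ))) ^ k := by
            rw [ENNReal.ofReal_one, one_mul]
  · -- Case (ii)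
    intro C M hdecomp hC hM
    constructor
    · refine ⟨aux_compactSeminorm jι hjι_cpt, fun x => κ • x, fun x hx y hy => ?_, fun x hx y hy => ?_⟩
      · rw [← smul_sub, norm_smul, Real.norm_eq_abs, abs_of_pos hκ]
      · rw [hdecomp x hx, hdecomp y hy]
        have heq : (C x + M x) - (C y + M y) = (C x - C y) + (M x - M y) := by abel
        rw [heq]
        have hjeq : ‖jι (κ • x) - jι (κ • y)‖ = κ * ‖jι x - jι y‖ := by
          rw [← map_sub, ← smul_sub, map_smul, norm_smul, Real.norm_eq_abs, abs_of_pos hκ, map_sub]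
        calc ‖(C x - C y) + (M x - M y)‖
            ≤ ‖C x - C y‖ + ‖M x - M y‖ := norm_add_le _ _
          _ ≤ η * ‖x - y‖ + κ * ‖jι x - jι y‖ := add_le_add (hC x hx y hy) (hM x hx y hy)
          _ = η * ‖x - y‖ + ‖jι (κ • x) - jι (κ • y)‖ := by rw [hjeq]
    · intro hinvB σ hσ hσ'
      have hε : 0 < σ / (2*κ) := by positivity
      obtain ⟨U, hU1, hU2, hUmax⟩ := aux_maxsep jι hjι_cpt (σ/(2*κ)) hε
      have hq : 0 < η + σ := by linarith
      have hstep : ∀ d : ℝ, 0 < d → ∀ F : Set X, F ⊆ B →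
          (∀ y ∈ F, ∀ y' ∈ F, ‖y - y'‖ ≤ d) →
          ∃ P : X → Set X, (∀ u, P u ⊆ F) ∧ (F ⊆ ⋃ u ∈ U, P u) ∧
            ∀ u, ∀ y ∈ P u, ∀ y' ∈ P u, ‖S T y - S T y'‖ ≤ (η + σ) * d := by
        intro d hd F hFB hFd
        by_cases hFne : F.Nonempty
        · obtain ⟨y₀, hy₀⟩ := hFne
          refine ⟨fun u => {y ∈ F |
            ‖jι (d⁻¹ • (y - y₀)) - jι u‖ < σ/(2*κ)}, fun u => sep_subset _ _, ?_, ?_⟩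
          · intro y hy
            have hz : d⁻¹ • (y - y₀) ∈ closedBall (0:X) 1 := by
              rw [mem_closedBall, dist_zero_right, norm_smul, norm_inv,
                Real.norm_eq_abs, abs_of_pos hd]
              calc d⁻¹ * ‖y - y₀‖ ≤ d⁻¹ * d := by
                    apply mul_le_mul_of_nonneg_left (hFd y hy y₀ hy₀) (by positivity)
                _ = 1 := inv_mul_cancel₀ (ne_of_gt hd)
            obtain ⟨u, hu, hu2⟩ := hUmax _ hz
            exact mem_iUnion₂.mpr ⟨u, hu, hy, hu2⟩
          · intro u y hy y' hy'
            obtain ⟨hyF, hyb⟩ := hy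
            obtain ⟨hy'F, hy'b⟩ := hy'
            have h4 : jι (d⁻¹ • (y - y₀)) - jι (d⁻¹ • (y' - y₀))
                = d⁻¹ • (jι y - jι y') := by
              have he : (y - y₀) - (y' - y₀) = y - y' := by abel
              rw [← map_sub, ← smul_sub, he, map_smul, map_sub]
            have h3 : d⁻¹ * ‖jι y - jι y'‖ < σ/κ := by
              have hsum : σ/(2*κ) + σ/(2*κ) = σ/κ := by
                rw [← add_div, show σ + σ = 2 * σ by ring,
                  mul_div_mul_left σ κ two_ne_zero]
              have htri : ‖jι (d⁻¹ • (y - y₀)) - jι (d⁻¹ • (y' - y₀))‖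
                  ≤ ‖jι (d⁻¹ • (y - y₀)) - jι u‖
                    + ‖jι (d⁻¹ • (y' - y₀)) - jι u‖ := by
                simpa [dist_eq_norm] using dist_triangle_right
                  (jι (d⁻¹ • (y - y₀))) (jι (d⁻¹ • (y' - y₀))) (jι u)
              have hlt := htri.trans_lt ((add_lt_add hyb hy'b).trans_le hsum.le)
              rw [h4, norm_smul, norm_inv, Real.norm_eq_abs, abs_of_pos hd] at hlt
              exact hlt
            have key : ‖M y - M y'‖ ≤ σ * d := by
              have h6 : ‖jι y - jι y'‖ ≤ σ * d / κ := by
                have h5 : ‖jι y - jι y'‖ = d * (d⁻¹ * ‖jι y - jι y'‖) := by field_simp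
                rw [h5]
                calc d * (d⁻¹ * ‖jι y - jι y'‖) ≤ d * (σ/κ) :=
                      mul_le_mul_of_nonneg_left h3.le hd.le
                  _ = σ * d / κ := by ring
              calc ‖M y - M y'‖ ≤ κ * ‖jι y - jι y'‖ := hM y (hFB hyF) y' (hFB hy'F)
                _ ≤ κ * (σ * d / κ) := mul_le_mul_of_nonneg_left h6 hκ.le
                _ = σ * d := by field_simp
            rw [hdecomp y (hFB hyF), hdecomp y' (hFB hy'F)]
            have heq : (C y + M y) - (C y' + M y')
                = (C y - C y') + (M y - M y') := by abel
            rw [heq]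
            calc ‖(C y - C y') + (M y - M y')‖
                ≤ ‖C y - C y'‖ + ‖M y - M y'‖ := norm_add_le _ _
              _ ≤ η * ‖y - y'‖ + σ * d := add_le_add (hC y (hFB hyF) y' (hFB hy'F)) key
              _ ≤ η * d + σ * d := by nlinarith [hFd y hyF y' hy'F]
              _ = (η + σ) * d := by ring
        · refine ⟨fun _ => ∅, by simp, ?_, by simp⟩
          rw [not_nonempty_iff_eq_empty.mp hFne]
          exact empty_subset _
      obtain ⟨a, ha, hcov⟩ := cover_main V B S hS T hT.le hBV hBbdd hinvB (η+σ) hq U hstep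
      refine ⟨0, a, 1, ha, one_pos, fun k _ => ?_⟩
      have hle : (U.card : ℝ≥0∞) ≤ maxDisting (fun x w : X => ‖jι x - jι w‖)
          (closedBall (0 : X) 1) (σ / (2 * κ)) :=
        le_iSup_of_le U (le_iSup_of_le hU1 (le_iSup_of_le hU2 le_rfl))
      calc coverN (S (↑k * T) '' B) (a * (η + σ) ^ k) ≤ (U.card : ℝ≥0∞) ^ k := hcov k
        _ ≤ (maxDisting (fun x w : X => ‖jι x - jι w‖)
              (closedBall (0 : X) 1) (σ / (2 * κ))) ^ k := pow_le_pow_left' hle k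
        _ = ENNReal.ofReal 1 * (maxDisting (fun x w : X => ‖jι x - jι w‖)
              (closedBall (0 : X) 1) (σ / (2 * κ))) ^ k := by
            rw [ENNReal.ofReal_one, one_mul]


end Statement10
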